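/- Let M = 3/2 − √2 and κ = 1038/1000, and for ξ ∈ [0,1] define G_ξ(w,f) = (1 − f)·t·(1/2 − t) + 4Mξ·w/(1 − f), where t = 1 − w/(1 − f). Then for all ξ ∈ [0,1], all w_1, w_2, w_3 ∈ [0, 1/2] and all f_1, f_2, f_3 ∈ [1/13, 1/2] satisfying (1 − f_i)/2 ≤ w_i ≤ 1 − f_i for i = 1,2,3, one has (G_ξ(w_1,f_1)+G_ξ(w_2,f_2))/2 ≤ κ·G_ξ((w_1+w_2)/2, (f_1+f_2)/2) and (G_ξ(w_1,f_1)+G_ξ(w_2,f_2)+G_ξ(w_3,f_3))/3 ≤ κ·G_ξ((w_1+w_2+w_3)/3, (f_1+f_2+f_3)/3). -/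

import Mathlib

set_option maxHeartbeats 1000000 in
private lemma aux1 (u s : ℝ) (hu1 : 1/2 ≤ u) (hs0 : 0 ≤ s) (hs1 : 2*u + 3*s ≤ 24/13) :
    1038*(3432/10000)*s^2/4 ≤ 38*(u/2 + 13*(3432/10000)*s/16)*(u+s)^2 := by
  nlinarith [mul_nonneg hs0 (sq_nonneg (u+s)), mul_nonneg (by linarith : (0:ℝ) ≤ u - 1/2) (sq_nonneg (u+s)), sq_nonneg s, mul_nonneg hs0 hs0, mul_nonneg (mul_nonneg hs0 hs0) hs0, mul_nonneg (by linarith : (0:ℝ) ≤ 24/13 - 2*u - 3*s) (sq_nonneg s)]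

set_option maxHeartbeats 1000000 in
private lemma coreb (u s t : ℝ) (hu1 : 1/2 ≤ u) (hs0 : 0 ≤ s)
    (hs1 : 2*u + 3*s ≤ 24/13) (ht0 : 0 ≤ t) (ht1 : t ≤ u)
    (ht3 : 8*t ≤ 13*(3432/10000)*s) :
    (1038/1000)*(4*(3432/10000)*s*t/13 - 16*t^2/169) ≤
      (3432/10000)*(38/1000)*((u+t)/2)*(u+s)^2 + (38/1000)*((u+s)^2*((u-t)/2)*t)/2 := by
  nlinarith [mul_nonneg ht0 (by linarith : (0:ℝ) ≤ 13*(3432/10000)*s - 8*t),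
    mul_nonneg (by linarith : (0:ℝ) ≤ 24/13 - 2*u - 3*s) (mul_nonneg hs0 ht0),
    mul_nonneg (by linarith : (0:ℝ) ≤ u - 1/2) (mul_nonneg hs0 ht0),
    mul_nonneg (by linarith : (0:ℝ) ≤ u - 1/2) (sq_nonneg (u+s)),
    mul_nonneg ht0 (sq_nonneg (u+s)), mul_nonneg (mul_nonneg ht0 ht0) (by linarith : (0:ℝ) ≤ u - t),
    mul_nonneg (by linarith : (0:ℝ) ≤ 24/13 - 2*u - 3*s) (sq_nonneg s),
    sq_nonneg (s - 2*t), mul_nonneg (mul_nonneg hs0 hs0) ht0]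

set_option maxHeartbeats 1000000 in
private lemma aux2 (u s t τ : ℝ) (hu1 : 1/2 ≤ u) (hs0 : 0 ≤ s)
    (hs1 : 2*u + 3*s ≤ 24/13) (ht0 : 0 ≤ t) (ht1 : t ≤ u)
    (hτ2 : 13*τ ≤ 24*t) (hτ3 : τ ≤ 3*(3432/10000)*s) :
    (1038/1000)*((3432/10000)*s*τ/6 - τ^2/36) ≤
      (3432/10000)*(38/1000)*((u+t)/2)*(u+s)^2 + (38/1000)*((u+s)^2*((u-t)/2)*t)/2 := by
  rcases le_total (24*t) (39*(3432/10000)*s) with hcase | hcase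
  · have hb := coreb u s t hu1 hs0 hs1 ht0 ht1 (by linarith)
    nlinarith [hb, mul_nonneg (by linarith : (0:ℝ) ≤ 24*t/13 - τ)
      (by linarith : (0:ℝ) ≤ 6*(3432/10000)*s - τ - 24*t/13)]
  · have ha := aux1 u s hu1 hs0 hs1
    nlinarith [ha, sq_nonneg (τ - 3*(3432/10000)*s),
      mul_nonneg (by linarith : (0:ℝ) ≤ 8*t - 13*(3432/10000)*s) (sq_nonneg (u+s)),
      mul_nonneg (mul_nonneg ht0 (by linarith : (0:ℝ) ≤ u - t)) (sq_nonneg (u+s))]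

set_option maxHeartbeats 2000000 in
private lemma Fmax (w u p q : ℝ)
    (hu1 : 1/2 ≤ u) (hu2 : u ≤ 12/13) (hw1 : u ≤ 2*w) (hw2 : w ≤ u) (hw3 : w ≤ 1/2)
    (hq1 : 1/2 ≤ q) (hq2 : q ≤ 12/13) (hp1 : q ≤ 2*p) (hp2 : p ≤ q) (hp3 : p ≤ 1/2)
    (hz1 : 1 ≤ 3*q - u) (hz2 : 3*q - u ≤ 24/13) (hz3 : 3*q - u ≤ 2*(3*p - w)) :
    0 ≤ 1038/1000*(p*u-w*q)^2 - (3432/10000)*(1038/1000)*((u-q)*(p*u-w*q)) + (3432/10000)*(38/1000)*(w*q^2) + (38/1000)*(q^2*((u-w)*(2*w-u)))/2 := by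
  have hlast : (0:ℝ) ≤ q^2*((u-w)*(2*w-u)) :=
    mul_nonneg (sq_nonneg q) (mul_nonneg (by linarith) (by linarith))
  have hwq : (0:ℝ) ≤ w*q^2 := mul_nonneg (by linarith) (sq_nonneg q)
  rcases le_total q u with hs | hs
  · rcases le_total (p*u - w*q) 0 with hd | hd
    · nlinarith [sq_nonneg (p*u-w*q), mul_nonneg (by linarith : (0:ℝ) ≤ u - q) (by linarith : (0:ℝ) ≤ -(p*u-w*q))]
    · have hq' : (1+u)^2 ≤ 9*q^2 := by nlinarith [hz1]
      have hs' : 9*(u-q)^2 ≤ (2*u-1)^2 := by nlinarith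
      have hcl : (1038/1000)*(3432/10000)^2*(u-q)^2/4 ≤ (3432/10000)*(38/1000)*(w*q^2) := by
        nlinarith [mul_nonneg (by linarith : (0:ℝ) ≤ 2*w - u) (sq_nonneg q), hq', hs',
          mul_nonneg (by linarith : (0:ℝ) ≤ 12/13 - u) (sq_nonneg (2*u-1)),
          mul_nonneg (by linarith : (0:ℝ) ≤ u - 1/2) (sq_nonneg (1+u))]
      nlinarith [sq_nonneg (p*u-w*q - (1716/10000)*(u-q)), hcl, hlast]
  · rcases le_total 0 (p*u - w*q) with hd | hd
    · nlinarith [sq_nonneg (p*u-w*q), mul_nonneg (by linarith : (0:ℝ) ≤ q - u) hd]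
    · rcases le_total (p*u - w*q) ((3432/10000)*(u - q)) with hdc | hdc
      · nlinarith [mul_nonneg (by linarith : (0:ℝ) ≤ -(p*u-w*q)) (by linarith : (0:ℝ) ≤ (3432/10000)*(u-q) - (p*u-w*q))]
      · have hd6 : 0 ≤ 6*(p*u-w*q) + (3*q-u)*(2*w-u) := by
          nlinarith [mul_nonneg (by linarith : (0:ℝ) ≤ u) (by linarith : (0:ℝ) ≤ 2*(3*p-w) - (3*q-u))]
        rcases le_total ((3*q-u)*(2*w-u)) (3*(3432/10000)*(q-u)) with hb | hb
        · have h24 : 13*((3*q-u)*(2*w-u)) ≤ 24*(2*w-u) := by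
            nlinarith [mul_nonneg (by linarith : (0:ℝ) ≤ 24/13 - (3*q-u)) (by linarith : (0:ℝ) ≤ 2*w-u)]
          have ha2 := aux2 u (q-u) (2*w-u) ((3*q-u)*(2*w-u)) hu1 (by linarith)
            (by linarith) (by linarith) (by linarith) h24 (by linarith)
          have hV : 0 ≤ ((3*q-u)*(2*w-u)/6 + (p*u-w*q)) *
              ((3432/10000)*(q-u) - (3*q-u)*(2*w-u)/6 + (p*u-w*q)) := by
            apply mul_nonneg (by linarith) (by linarith)
          nlinarith [ha2, hV]
        · have h2w : 13*(3432/10000)*(q-u) ≤ 8*(2*w-u) := by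
            nlinarith [mul_nonneg (by linarith : (0:ℝ) ≤ 24/13 - (3*q-u)) (by linarith : (0:ℝ) ≤ 2*w-u)]
          have ha1 := aux1 u (q-u) hu1 (by linarith) (by linarith)
          nlinarith [ha1, sq_nonneg (p*u-w*q - (1716/10000)*(u-q)), hlast,
            mul_nonneg (by linarith : (0:ℝ) ≤ 16*w - 8*u - 13*(3432/10000)*(q-u)) (sq_nonneg q)]

set_option maxHeartbeats 1000000 in
private lemma keyF (w u p q c : ℝ)
    (hu1 : 1/2 ≤ u) (hu2 : u ≤ 12/13) (hw1 : u ≤ 2*w) (hw2 : w ≤ u) (hw3 : w ≤ 1/2)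
    (hq1 : 1/2 ≤ q) (hq2 : q ≤ 12/13) (hp1 : q ≤ 2*p) (hp2 : p ≤ q) (hp3 : p ≤ 1/2)
    (hz1 : 1 ≤ 3*q - u) (hz2 : 3*q - u ≤ 24/13) (hz3 : 3*q - u ≤ 2*(3*p - w))
    (hc0 : 0 ≤ c) (hc1 : c ≤ 3432/10000) :
    0 ≤ 1038/1000*(p*u-w*q)^2 - c*(1038/1000)*((u-q)*(p*u-w*q)) + c*(38/1000)*(w*q^2) + (38/1000)*(q^2*((u-w)*(2*w-u)))/2 := by
  have h0 : 0 ≤ 1038/1000*(p*u-w*q)^2 + (38/1000)*(q^2*((u-w)*(2*w-u)))/2 := by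
    have := mul_nonneg (sq_nonneg q) (mul_nonneg (by linarith : (0:ℝ) ≤ u - w) (by linarith : (0:ℝ) ≤ 2*w - u))
    nlinarith [sq_nonneg (p*u-w*q)]
  have hm := Fmax w u p q hu1 hu2 hw1 hw2 hw3 hq1 hq2 hp1 hp2 hp3 hz1 hz2 hz3
  nlinarith [mul_nonneg (by linarith : (0:ℝ) ≤ 3432/10000 - c) h0, mul_nonneg hc0 hm]

set_option maxHeartbeats 1000000 in
private lemma step (w u p q c : ℝ)
    (hu1 : 1/2 ≤ u) (hu2 : u ≤ 12/13) (hw1 : u ≤ 2*w) (hw2 : w ≤ u) (hw3 : w ≤ 1/2)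
    (hq1 : 1/2 ≤ q) (hq2 : q ≤ 12/13) (hp1 : q ≤ 2*p) (hp2 : p ≤ q) (hp3 : p ≤ 1/2)
    (hz1 : 1 ≤ 3*q - u) (hz2 : 3*q - u ≤ 24/13) (hz3 : 3*q - u ≤ 2*(3*p - w))
    (hc0 : 0 ≤ c) (hc1 : c ≤ 3432/10000) :
    (3/2*w*u - 1/2*u^2 - w^2 + c*w)/u ≤ 1038/1000 *
      ((q*(3/2*p*q - 1/2*q^2 - p^2 + c*p) + (3/2*q^2 - 2*p*q + c*q)*(w-p) + (-(1/2)*q^2 + p^2 - c*p)*(u-q))/q^2) := by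
  have hu : (0:ℝ) < u := by linarith
  have hq : (0:ℝ) < q^2 := by positivity
  rw [mul_div_assoc', div_le_div_iff₀ hu hq]
  have hF := keyF w u p q c hu1 hu2 hw1 hw2 hw3 hq1 hq2 hp1 hp2 hp3 hz1 hz2 hz3 hc0 hc1
  nlinarith [hF]

/-- `G_ξ(w, f) = (1 − f)·t·(1/2 − t) + 4Mξ·w/(1 − f)` with `t = 1 − w/(1 − f)`
and `M = 3/2 − √2`. -/
noncomputable def Gxi (ξ w f : ℝ) : ℝ :=
  (1 - f) * ((1 - w / (1 - f)) * (1 / 2 - (1 - w / (1 - f)))) +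
    4 * (3 / 2 - Real.sqrt 2) * ξ * w / (1 - f)

private lemma combine2 (a b X₁ X₂ P q : ℝ) (hq : q ≠ 0)
    (h₁ : a ≤ 1038/1000 * (X₁/q^2)) (h₂ : b ≤ 1038/1000 * (X₂/q^2))
    (hX : X₁ + X₂ = 2*(q*P)) :
    (a+b)/2 ≤ 1038/1000 * (P/q) := by
  have hd : X₁/q^2 + X₂/q^2 = 2*(P/q) := by
    rw [← add_div, hX]; field_simp
  linarith

private lemma combine3 (a b c' X₁ X₂ X₃ P q : ℝ) (hq : q ≠ 0)
    (h₁ : a ≤ 1038/1000 * (X₁/q^2)) (h₂ : b ≤ 1038/1000 * (X₂/q^2))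
    (h₃ : c' ≤ 1038/1000 * (X₃/q^2))
    (hX : X₁ + X₂ + X₃ = 3*(q*P)) :
    (a+b+c')/3 ≤ 1038/1000 * (P/q) := by
  have hd : X₁/q^2 + X₂/q^2 + X₃/q^2 = 3*(P/q) := by
    rw [← add_div, ← add_div, hX]; field_simp
  linarith

set_option maxHeartbeats 4000000

/-- The averaged Jensen-type inequalities for `G_ξ`, `ξ ∈ [0,1]`, with loss factor
`κ = 1038/1000`, on the region `w_i ∈ [0,1/2]`, `f_i ∈ [1/13,1/2]`,
`(1 − f_i)/2 ≤ w_i ≤ 1 − f_i`. -/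
theorem Gxi_jensen (ξ : ℝ) (hξ : ξ ∈ Set.Icc (0 : ℝ) 1)
    (w₁ w₂ w₃ f₁ f₂ f₃ : ℝ)
    (hw₁ : w₁ ∈ Set.Icc (0 : ℝ) (1 / 2)) (hw₂ : w₂ ∈ Set.Icc (0 : ℝ) (1 / 2))
    (hw₃ : w₃ ∈ Set.Icc (0 : ℝ) (1 / 2))
    (hf₁ : f₁ ∈ Set.Icc (1 / 13 : ℝ) (1 / 2)) (hf₂ : f₂ ∈ Set.Icc (1 / 13 : ℝ) (1 / 2))
    (hf₃ : f₃ ∈ Set.Icc (1 / 13 : ℝ) (1 / 2))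
    (h₁ : (1 - f₁) / 2 ≤ w₁ ∧ w₁ ≤ 1 - f₁)
    (h₂ : (1 - f₂) / 2 ≤ w₂ ∧ w₂ ≤ 1 - f₂)
    (h₃ : (1 - f₃) / 2 ≤ w₃ ∧ w₃ ≤ 1 - f₃) :
    (Gxi ξ w₁ f₁ + Gxi ξ w₂ f₂) / 2 ≤
        (1038 / 1000) * Gxi ξ ((w₁ + w₂) / 2) ((f₁ + f₂) / 2) ∧
      (Gxi ξ w₁ f₁ + Gxi ξ w₂ f₂ + Gxi ξ w₃ f₃) / 3 ≤
        (1038 / 1000) * Gxi ξ ((w₁ + w₂ + w₃) / 3) ((f₁ + f₂ + f₃) / 3) := by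
  obtain ⟨hξ0, hξ1⟩ := hξ
  obtain ⟨hw₁0, hw₁1⟩ := hw₁
  obtain ⟨hw₂0, hw₂1⟩ := hw₂
  obtain ⟨hw₃0, hw₃1⟩ := hw₃
  obtain ⟨hf₁0, hf₁1⟩ := hf₁
  obtain ⟨hf₂0, hf₂1⟩ := hf₂
  obtain ⟨hf₃0, hf₃1⟩ := hf₃
  obtain ⟨h₁a, h₁b⟩ := h₁
  obtain ⟨h₂a, h₂b⟩ := h₂
  obtain ⟨h₃a, h₃b⟩ := h₃
  have hsq : Real.sqrt 2 ^ 2 = 2 := Real.sq_sqrt (by norm_num)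
  have hsqnn : (0:ℝ) ≤ Real.sqrt 2 := Real.sqrt_nonneg 2
  have hs2a : Real.sqrt 2 ≤ 14143/10000 := by nlinarith
  have hs2b : 14142/10000 ≤ Real.sqrt 2 := by nlinarith
  have hA0 : (0:ℝ) ≤ 4*(3/2 - Real.sqrt 2) := by linarith
  have hc0 : 0 ≤ 4*(3/2 - Real.sqrt 2)*ξ := mul_nonneg hA0 hξ0
  have hc1 : 4*(3/2 - Real.sqrt 2)*ξ ≤ 3432/10000 := by
    nlinarith [mul_nonneg hA0 (by linarith : (0:ℝ) ≤ 1 - ξ)]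
  have hGeq : ∀ w f : ℝ, f ≤ 1/2 → Gxi ξ w f =
      (3/2*w*(1-f) - 1/2*(1-f)^2 - w^2 + (4*(3/2 - Real.sqrt 2)*ξ)*w)/(1-f) := by
    intro w f hf
    have hne : (1:ℝ) - f ≠ 0 := by intro h; linarith
    unfold Gxi
    field_simp
    ring
  constructor
  · have e₁ := hGeq w₁ f₁ hf₁1
    have e₂ := hGeq w₂ f₂ hf₂1
    have em := hGeq ((w₁+w₂)/2) ((f₁+f₂)/2) (by linarith)
    rw [e₁, e₂, em]
    have s₁ := step w₁ (1-f₁) ((w₁+w₂)/2) (1-(f₁+f₂)/2) (4*(3/2 - Real.sqrt 2)*ξ)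
      (by linarith) (by linarith) (by linarith) (by linarith) (by linarith)
      (by linarith) (by linarith) (by linarith) (by linarith) (by linarith)
      (by linarith) (by linarith) (by linarith) hc0 hc1
    have s₂ := step w₂ (1-f₂) ((w₁+w₂)/2) (1-(f₁+f₂)/2) (4*(3/2 - Real.sqrt 2)*ξ)
      (by linarith) (by linarith) (by linarith) (by linarith) (by linarith)
      (by linarith) (by linarith) (by linarith) (by linarith) (by linarith)
      (by linarith) (by linarith) (by linarith) hc0 hc1
    have hqne : (1:ℝ)-(f₁+f₂)/2 ≠ 0 := by intro h; linarith
    exact combine2 _ _ _ _ _ _ hqne s₁ s₂ (by ring)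
  · have e₁ := hGeq w₁ f₁ hf₁1
    have e₂ := hGeq w₂ f₂ hf₂1
    have e₃ := hGeq w₃ f₃ hf₃1
    have em := hGeq ((w₁+w₂+w₃)/3) ((f₁+f₂+f₃)/3) (by linarith)
    rw [e₁, e₂, e₃, em]
    have s₁ := step w₁ (1-f₁) ((w₁+w₂+w₃)/3) (1-(f₁+f₂+f₃)/3) (4*(3/2 - Real.sqrt 2)*ξ)
      (by linarith) (by linarith) (by linarith) (by linarith) (by linarith)
      (by linarith) (by linarith) (by linarith) (by linarith) (by linarith)
      (by linarith) (by linarith) (by linarith) hc0 hc1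
    have s₂ := step w₂ (1-f₂) ((w₁+w₂+w₃)/3) (1-(f₁+f₂+f₃)/3) (4*(3/2 - Real.sqrt 2)*ξ)
      (by linarith) (by linarith) (by linarith) (by linarith) (by linarith)
      (by linarith) (by linarith) (by linarith) (by linarith) (by linarith)
      (by linarith) (by linarith) (by linarith) hc0 hc1
    have s₃ := step w₃ (1-f₃) ((w₁+w₂+w₃)/3) (1-(f₁+f₂+f₃)/3) (4*(3/2 - Real.sqrt 2)*ξ)
      (by linarith) (by linarith) (by linarith) (by linarith) (by linarith)
      (by linarith) (by linarith) (by linarith) (by linarith) (by linarith)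
      (by linarith) (by linarith) (by linarith) hc0 hc1
    have hqne : (1:ℝ)-(f₁+f₂+f₃)/3 ≠ 0 := by intro h; linarith
    exact combine3 _ _ _ _ _ _ _ _ hqne s₁ s₂ s₃ (by ring)
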